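/- Let K : ℝ^d × ℝ^d → ℂ be continuous and ψ ∈ L²(ℝ^d), and suppose that for every x ∈ ℝ^d there exists a compact Lebesgue-measurable set A ⊆ ℝ^d with ψ_A(x) ≠ 0. Let I ⊆ ℝ^d be a compact d-dimensional interval (a product of d compact intervals) of positive Lebesgue measure. Then for every ε > 0 there exist finitely many compact Lebesgue-measurable sets A_1, …, A_M ⊆ ℝ^d, bounded Lebesgue-measurable sets D_1, …, D_M ⊆ ℝ^d and complex numbers c_1, …, c_M such that ‖χ_I − Σ_{k=1}^M c_k · χ_{D_k} · ψ_{A_k}‖_{L²(ℝ^d)} < ε. -/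

import Mathlib

open MeasureTheory


/-- Approximation of the indicator of a compact `d`-interval `I` of positive
measure: if every point of `ℝ^d` is reachable (some compact measurable set has
nonzero restricted evolution there), then for every `ε > 0` the indicator
`χ_I` is within `ε` in `L²` of a finite linear combination
`Σ_k c_k · χ_{D_k} · ψ_{A_k}` with `A_k` compact measurable and `D_k` bounded
measurable. -/
lemma cont_evol {d : ℕ} (K : EuclideanSpace ℝ (Fin d) × EuclideanSpace ℝ (Fin d) → ℂ)
    (hK : Continuous K) (ψ : EuclideanSpace ℝ (Fin d) → ℂ) (hψ : MemLp ψ 2 volume)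
    {A : Set (EuclideanSpace ℝ (Fin d))} (hA : IsCompact A) (hAm : MeasurableSet A) :
    Continuous fun x => ∫ y in A, K (x, y) * ψ y := by
  rw [continuous_iff_continuousAt]
  intro x₀
  have hfin : volume A < ⊤ := hA.measure_lt_top
  haveI : IsFiniteMeasure (volume.restrict A) := by
    constructor; rwa [Measure.restrict_apply_univ]
  have hψi : Integrable ψ (volume.restrict A) :=
    (hψ.restrict A).integrable (by norm_num)
  obtain ⟨C, hC⟩ := ((isCompact_closedBall x₀ 1).prod hA).exists_bound_of_continuousOn
    hK.continuousOn
  apply continuousAt_of_dominated (bound := fun y => max C 0 * ‖ψ y‖)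
  · filter_upwards with x
    exact ((hK.comp (Continuous.prodMk_right x)).aestronglyMeasurable.mul
      hψ.aestronglyMeasurable.restrict)
  · filter_upwards [Metric.closedBall_mem_nhds x₀ one_pos] with x hx
    filter_upwards [ae_restrict_mem hAm] with y hy
    rw [norm_mul]
    gcongr
    exact le_max_of_le_left (hC (x, y) ⟨hx, hy⟩)
  · exact hψi.norm.const_mul _
  · filter_upwards with y
    exact ((hK.comp (continuous_id.prodMk continuous_const)).mul continuous_const).continuousAt

theorem stmt_11 (d : ℕ) (hd : 1 ≤ d)
    (K : EuclideanSpace ℝ (Fin d) × EuclideanSpace ℝ (Fin d) → ℂ)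
    (hK : Continuous K)
    (ψ : EuclideanSpace ℝ (Fin d) → ℂ) (hψ : MemLp ψ 2 volume)
    (hreach : ∀ x : EuclideanSpace ℝ (Fin d),
      ∃ A : Set (EuclideanSpace ℝ (Fin d)), IsCompact A ∧ MeasurableSet A ∧
        ∫ y in A, K (x, y) * ψ y ≠ 0)
    (a b : Fin d → ℝ) (I : Set (EuclideanSpace ℝ (Fin d)))
    (hI : I = {x : EuclideanSpace ℝ (Fin d) | ∀ i, x i ∈ Set.Icc (a i) (b i)})
    (hIpos : 0 < volume I)
    (ε : ℝ) (hε : 0 < ε) :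
    ∃ (M : ℕ) (A D : Fin M → Set (EuclideanSpace ℝ (Fin d))) (c : Fin M → ℂ),
      (∀ k, IsCompact (A k) ∧ MeasurableSet (A k)) ∧
      (∀ k, Bornology.IsBounded (D k) ∧ MeasurableSet (D k)) ∧
      eLpNorm
        (fun x => Set.indicator I (fun _ => (1 : ℂ)) x
          - ∑ k, c k * Set.indicator (D k) (fun _ => (1 : ℂ)) x
              * ∫ y in A k, K (x, y) * ψ y)
        2 volume < ENNReal.ofReal ε := by
  classical
  -- I is compact
  have hIeq : I = (EuclideanSpace.equiv (Fin d) ℝ) ⁻¹'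
      (Set.univ.pi fun i => Set.Icc (a i) (b i)) := by
    rw [hI]; ext x
    simp only [Set.mem_preimage, Set.mem_univ_pi, Set.mem_setOf_eq]
    rfl
  have hIc : IsCompact I := by
    rw [hIeq]
    exact ((EuclideanSpace.equiv (Fin d) ℝ).toHomeomorph.isCompact_preimage).mpr
      (isCompact_univ_pi fun i => isCompact_Icc)
  have hIm : MeasurableSet I := hIc.isClosed.measurableSet
  have hfin : volume I < ⊤ := hIc.measure_lt_top
  set τ : ℝ := (volume I ^ ((1:ℝ)/2)).toReal with hτ
  have hτ0 : 0 ≤ τ := ENNReal.toReal_nonneg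
  set δ : ℝ := ε / (2 * (τ + 1)) with hδdef
  have hδ : 0 < δ := by positivity
  -- evolutions
  choose A' hA'c hA'm hA'ne using hreach
  set f : EuclideanSpace ℝ (Fin d) → EuclideanSpace ℝ (Fin d) → ℂ :=
    fun x y => ∫ t in A' x, K (y, t) * ψ t with hf
  have hfc : ∀ x, Continuous (f x) := fun x => cont_evol K hK ψ hψ (hA'c x) (hA'm x)
  set c' : EuclideanSpace ℝ (Fin d) → ℂ := fun x => (f x x)⁻¹ with hc'
  have hr : ∀ x, ∃ rr > 0, ∀ y ∈ Metric.ball x rr, ‖1 - c' x * f x y‖ < δ := by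
    intro x
    have hg : ContinuousAt (fun y => (1:ℂ) - c' x * f x y) x :=
      (continuous_const.sub (continuous_const.mul (hfc x))).continuousAt
    have h0 : (1 : ℂ) - c' x * f x x = 0 := by
      rw [hc', inv_mul_cancel₀ (hA'ne x), sub_self]
    rw [Metric.continuousAt_iff] at hg
    obtain ⟨rr, hrr, h⟩ := hg δ hδ
    refine ⟨rr, hrr, fun y hy => ?_⟩
    have := h (Metric.mem_ball.mp hy)
    rwa [dist_eq_norm, h0, sub_zero] at this
  choose r hr0 hrb using hr
  -- finite subcover
  obtain ⟨t, htI, hcov⟩ := hIc.elim_nhds_subcover (fun x => Metric.ball x (r x))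
    (fun x _ => Metric.ball_mem_nhds x (hr0 x))
  set M := t.card with hM
  set p : Fin M → EuclideanSpace ℝ (Fin d) := fun k => (t.equivFin.symm k : _) with hp
  have hcov' : ∀ z ∈ I, ∃ k : Fin M, z ∈ Metric.ball (p k) (r (p k)) := by
    intro z hz
    obtain ⟨x, hxt, hzx⟩ := Set.mem_iUnion₂.mp (hcov hz)
    refine ⟨t.equivFin ⟨x, hxt⟩, ?_⟩
    simp only [hp, Equiv.symm_apply_apply]
    exact hzx
  set D : Fin M → Set (EuclideanSpace ℝ (Fin d)) := fun k =>
    (I ∩ Metric.ball (p k) (r (p k))) \ ⋃ (j : Fin M) (_ : j < k),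
      Metric.ball (p j) (r (p j)) with hD
  refine ⟨M, fun k => A' (p k), D, fun k => c' (p k),
    fun k => ⟨hA'c _, hA'm _⟩, fun k => ⟨?_, ?_⟩, ?_⟩
  · exact hIc.isBounded.subset (fun x hx => hx.1.1)
  · exact ((hIm.inter measurableSet_ball).diff
      (MeasurableSet.iUnion fun j => MeasurableSet.iUnion fun _ => measurableSet_ball))
  · have hbound : ∀ x, ‖Set.indicator I (fun _ => (1 : ℂ)) x
          - ∑ k, c' (p k) * Set.indicator (D k) (fun _ => (1 : ℂ)) x * f (p k) x‖
        ≤ ‖Set.indicator I (fun _ => δ) x‖ := by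
      intro x
      by_cases hxI : x ∈ I
      · -- minimal covering index
        have hS : (Finset.univ.filter
            (fun k : Fin M => x ∈ Metric.ball (p k) (r (p k)))).Nonempty := by
          obtain ⟨k, hk⟩ := hcov' x hxI
          exact ⟨k, Finset.mem_filter.mpr ⟨Finset.mem_univ _, hk⟩⟩
        set k₀ := (Finset.univ.filter
            (fun k : Fin M => x ∈ Metric.ball (p k) (r (p k)))).min' hS with hk₀
        have hk₀S : x ∈ Metric.ball (p k₀) (r (p k₀)) :=
          (Finset.mem_filter.mp (Finset.min'_mem _ hS)).2
        have hxD : x ∈ D k₀ := by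
          refine ⟨⟨hxI, hk₀S⟩, ?_⟩
          intro hmem
          obtain ⟨j, hj⟩ := Set.mem_iUnion.mp hmem
          obtain ⟨hjk, hjx⟩ := Set.mem_iUnion.mp hj
          exact absurd (Finset.min'_le _ j
            (Finset.mem_filter.mpr ⟨Finset.mem_univ _, hjx⟩)) (not_le.mpr hjk)
        have hxDne : ∀ k, k ≠ k₀ → x ∉ D k := by
          intro k hk hxk
          rcases lt_or_gt_of_ne hk with h | h
          · exact absurd (Finset.min'_le _ k
              (Finset.mem_filter.mpr ⟨Finset.mem_univ _, hxk.1.2⟩)) (not_le.mpr h)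
          · exact hxk.2 (Set.mem_iUnion.mpr ⟨k₀, Set.mem_iUnion.mpr ⟨h, hk₀S⟩⟩)
        have hsum : ∑ k, c' (p k) * Set.indicator (D k) (fun _ => (1 : ℂ)) x * f (p k) x
            = c' (p k₀) * f (p k₀) x := by
          rw [Finset.sum_eq_single k₀]
          · rw [Set.indicator_of_mem hxD, mul_one]
          · intro k _ hk
            rw [Set.indicator_of_notMem (hxDne k hk), mul_zero, zero_mul]
          · intro h; exact absurd (Finset.mem_univ k₀) h
        rw [hsum, Set.indicator_of_mem hxI, Set.indicator_of_mem hxI]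
        have := hrb (p k₀) x hk₀S
        rw [Real.norm_eq_abs, abs_of_pos hδ]
        exact this.le
      · have : ∀ k, x ∉ D k := fun k hk => hxI hk.1.1
        rw [Set.indicator_of_notMem hxI, Set.indicator_of_notMem hxI]
        have hsum : ∑ k, c' (p k) * Set.indicator (D k) (fun _ => (1 : ℂ)) x * f (p k) x
            = 0 := by
          apply Finset.sum_eq_zero
          intro k _
          rw [Set.indicator_of_notMem (this k), mul_zero, zero_mul]
        rw [hsum, sub_zero, norm_zero, norm_zero]
    calc eLpNorm _ 2 volume
        ≤ eLpNorm (Set.indicator I fun _ => δ) 2 volume := eLpNorm_mono hbound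
      _ = ‖δ‖ₑ * volume I ^ ((1:ℝ)/2) := by
          rw [eLpNorm_indicator_const hIm two_ne_zero ENNReal.ofNat_ne_top]
          norm_num
      _ < ENNReal.ofReal ε := by
          rw [Real.enorm_eq_ofReal hδ.le]
          have hVfin : volume I ^ ((1:ℝ)/2) ≠ ⊤ :=
            (ENNReal.rpow_lt_top_of_nonneg (by norm_num) hfin.ne).ne
          have : volume I ^ ((1:ℝ)/2) = ENNReal.ofReal τ := by
            rw [hτ, ENNReal.ofReal_toReal hVfin]
          rw [this, ← ENNReal.ofReal_mul hδ.le]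
          apply (ENNReal.ofReal_lt_ofReal_iff hε).mpr
          have h1 : δ * τ ≤ δ * (τ + 1) := by nlinarith
          have h2 : δ * (τ + 1) = ε / 2 := by
            rw [hδdef]; field_simp
          linarith
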